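/- Let Q be a commutative noetherian ring, let f_1, …, f_c ∈ Q (with c ≥ 1) be a regular sequence, and set R = Q/(f_1, …, f_c). Let M and N be finitely generated R-modules such that Tor_j^Q(M, N) = 0 for all sufficiently large j and Tor_j^R(M, N) has finite length for all sufficiently large j. Let P_ev and P_odd be polynomials with rational coefficients of degree at most c − 1 such that length_R Tor_{2j}^R(M, N) = P_ev(j) and length_R Tor_{2j+1}^R(M, N) = P_odd(j) for all sufficiently large j. For each j ≥ 0 set β_j = length_R Tor_j^R(M, N) if this length is finite, and β_j = 0 otherwise. Then the sequence n ↦ (Σ_{j=0}^n (−1)^j β_j)/n^c converges as n → ∞, and its limit equals (a_{c−1} − b_{c−1})/(2^c · c), where a_{c−1} and b_{c−1} are the coefficients of j^{c−1} in P_ev and P_odd respectively. -/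

import Mathlib

open CategoryTheory

/-- `Tor_n^A(M,N)` for modules over a commutative ring `A`. -/
noncomputable def modTor (A : Type) [CommRing A] (n : ℕ) (M N : ModuleCat.{0} A) :
    ModuleCat.{0} A :=
  ((Tor (ModuleCat.{0} A) n).obj M).obj N

/-- The length of an `A`-module, i.e. the height of `⊤` in its lattice of submodules. -/
noncomputable def modLength (A : Type) [Ring A] (M : Type) [AddCommGroup M] [Module A M] :
    ℕ∞ :=
  Order.height (⊤ : Submodule A M)



open Filter

private lemma auxInvPow (i : ℕ) :
    Tendsto (fun n : ℕ => (1/(n:ℝ))^i) atTop (nhds ((0:ℝ)^i)) :=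
  tendsto_one_div_atTop_nhds_zero_nat.pow i

private lemma auxConst (C : ℝ) (c : ℕ) (hc : c ≠ 0) :
    Tendsto (fun m : ℕ => C/(m:ℝ)^c) atTop (nhds 0) := by
  have h := (tendsto_one_div_atTop_nhds_zero_nat.pow c).const_mul C
  rw [zero_pow hc, mul_zero] at h
  apply h.congr
  intro n
  rw [one_div, inv_pow, ← div_eq_mul_inv]

private lemma auxHalf : Tendsto (fun m : ℕ => (m:ℝ)/(2*(m:ℝ)+1)) atTop (nhds (1/2)) := by
  have h : Tendsto (fun m : ℕ => 2 + 1/(m:ℝ)) atTop (nhds (2 + 0)) :=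
    tendsto_const_nhds.add tendsto_one_div_atTop_nhds_zero_nat
  rw [add_zero] at h
  have h2 := h.inv₀ (by norm_num)
  rw [show (2:ℝ)⁻¹ = 1/2 by norm_num] at h2
  apply Filter.Tendsto.congr' _ h2
  filter_upwards [eventually_ge_atTop 1] with m hm
  have hm0 : (m:ℝ) ≠ 0 := Nat.cast_ne_zero.mpr (by omega)
  have hm1 : 2*(m:ℝ)+1 ≠ 0 := by positivity
  field_simp

private lemma auxFaul (p : ℕ) :
    Tendsto (fun n : ℕ => (∑ k ∈ Finset.range n, (k:ℝ)^p) / (n:ℝ)^(p+1)) atTop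
      (nhds (1/((p:ℝ)+1))) := by
  have hlim : Tendsto
      (fun n : ℕ => ∑ i ∈ Finset.range (p+1),
        ((bernoulli i : ℝ) * ((p+1).choose i : ℝ)/((p:ℝ)+1)) * (1/(n:ℝ))^i) atTop
      (nhds (∑ i ∈ Finset.range (p+1),
        ((bernoulli i : ℝ) * ((p+1).choose i : ℝ)/((p:ℝ)+1)) * (0:ℝ)^i)) := by
    apply tendsto_finset_sum
    intro i _
    exact (auxInvPow i).const_mul _
  have hval : (∑ i ∈ Finset.range (p+1),
      ((bernoulli i : ℝ) * ((p+1).choose i : ℝ)/((p:ℝ)+1)) * (0:ℝ)^i) = 1/((p:ℝ)+1) := by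
    rw [Finset.sum_eq_single_of_mem 0 (Finset.mem_range.mpr (Nat.succ_pos p))]
    · simp
    · intro i _ hi
      simp [zero_pow hi]
  rw [hval] at hlim
  apply Filter.Tendsto.congr' _ hlim
  filter_upwards [eventually_ge_atTop 1] with n hn
  have hn0 : (n:ℝ) ≠ 0 := Nat.cast_ne_zero.mpr (by omega)
  have hp1 : (p:ℝ)+1 ≠ 0 := by positivity
  have h := sum_range_pow n p
  have h2 : (∑ k ∈ Finset.range n, (k:ℝ)^p)
      = ∑ i ∈ Finset.range (p+1),
          (bernoulli i : ℝ) * ((p+1).choose i : ℝ) * (n:ℝ)^(p+1-i)/((p:ℝ)+1) := by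
    exact_mod_cast congrArg (fun q : ℚ => (q:ℝ)) h
  rw [h2, Finset.sum_div]
  apply Finset.sum_congr rfl
  intro i hi
  have hip : i ≤ p := Nat.lt_succ_iff.mp (Finset.mem_range.mp hi)
  have hpow : (n:ℝ)^(p+1) = (n:ℝ)^(p+1-i) * (n:ℝ)^i := by
    rw [← pow_add]; congr 1; omega
  rw [hpow]
  have hne : (n:ℝ)^(p+1-i) ≠ 0 := pow_ne_zero _ hn0
  rw [one_div, inv_pow]
  field_simp

private lemma auxFaul' (p : ℕ) :
    Tendsto (fun n : ℕ => (∑ k ∈ Finset.range (n+1), (k:ℝ)^p) / (n:ℝ)^(p+1)) atTop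
      (nhds (1/((p:ℝ)+1))) := by
  have h1 := auxFaul p
  have h2 : Tendsto (fun n : ℕ => (n:ℝ)^p/(n:ℝ)^(p+1)) atTop (nhds 0) := by
    apply Filter.Tendsto.congr' _ tendsto_one_div_atTop_nhds_zero_nat
    filter_upwards [eventually_ge_atTop 1] with n hn
    have hn0 : (n:ℝ) ≠ 0 := Nat.cast_ne_zero.mpr (by omega)
    rw [pow_succ]
    field_simp
  have h3 := h1.add h2
  rw [add_zero] at h3
  apply h3.congr
  intro n
  rw [Finset.sum_range_succ, add_div]

private lemma auxPoly (P : Polynomial ℚ) (d : ℕ) (h : P.natDegree < d + 1) :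
    Tendsto (fun n : ℕ => ((P.eval (n:ℚ) : ℚ):ℝ)/(n:ℝ)^d) atTop
      (nhds ((P.coeff d : ℝ))) := by
  have hlim : Tendsto
      (fun n : ℕ => ∑ i ∈ Finset.range (d+1), (P.coeff i : ℝ) * (1/(n:ℝ))^(d-i)) atTop
      (nhds (∑ i ∈ Finset.range (d+1), (P.coeff i : ℝ) * (0:ℝ)^(d-i))) :=
    tendsto_finset_sum _ fun i _ => (auxInvPow (d-i)).const_mul _
  have hval : (∑ i ∈ Finset.range (d+1), (P.coeff i : ℝ) * (0:ℝ)^(d-i)) = (P.coeff d : ℝ) := by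
    rw [Finset.sum_eq_single_of_mem d (Finset.mem_range.mpr (Nat.lt_succ_self d))]
    · simp
    · intro i hi hne
      have hi' : i < d + 1 := Finset.mem_range.mp hi
      have : d - i ≠ 0 := by omega
      simp [zero_pow this]
  rw [hval] at hlim
  apply Filter.Tendsto.congr' _ hlim
  filter_upwards [eventually_ge_atTop 1] with n hn
  have hn0 : (n:ℝ) ≠ 0 := Nat.cast_ne_zero.mpr (by omega)
  have h2 : ((P.eval (n:ℚ) : ℚ):ℝ) = ∑ i ∈ Finset.range (d+1), (P.coeff i : ℝ) * (n:ℝ)^i := by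
    rw [Polynomial.eval_eq_sum_range' h]
    push_cast
    rfl
  rw [h2, Finset.sum_div]
  apply Finset.sum_congr rfl
  intro i hi
  have hid : i ≤ d := Nat.lt_succ_iff.mp (Finset.mem_range.mp hi)
  have hpow : (n:ℝ)^d = (n:ℝ)^i * (n:ℝ)^(d-i) := by
    rw [← pow_add]; congr 1; omega
  rw [hpow]
  have hne : (n:ℝ)^(d-i) ≠ 0 := pow_ne_zero _ hn0
  have hne2 : (n:ℝ)^i ≠ 0 := pow_ne_zero _ hn0
  rw [one_div, inv_pow]
  field_simp

private lemma auxPolySum (D : Polynomial ℚ) (c : ℕ) (hc : 1 ≤ c) (h : D.natDegree < c) :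
    Tendsto (fun m : ℕ => (∑ k ∈ Finset.range (m+1), ((D.eval (k:ℚ) : ℚ):ℝ)) / (m:ℝ)^c) atTop
      (nhds ((D.coeff (c-1) : ℝ)/(c:ℝ))) := by
  have hlim : Tendsto
      (fun m : ℕ => ∑ i ∈ Finset.range c,
        (D.coeff i : ℝ) * ((∑ k ∈ Finset.range (m+1), (k:ℝ)^i)/(m:ℝ)^(i+1)) * (1/(m:ℝ))^(c-1-i))
      atTop
      (nhds (∑ i ∈ Finset.range c,
        (D.coeff i : ℝ) * (1/((i:ℝ)+1)) * (0:ℝ)^(c-1-i))) := by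
    apply tendsto_finset_sum
    intro i _
    exact (((auxFaul' i).const_mul _).mul (auxInvPow (c-1-i)))
  have hval : (∑ i ∈ Finset.range c,
      (D.coeff i : ℝ) * (1/((i:ℝ)+1)) * (0:ℝ)^(c-1-i)) = (D.coeff (c-1) : ℝ)/(c:ℝ) := by
    rw [Finset.sum_eq_single_of_mem (c-1) (Finset.mem_range.mpr (by omega))]
    · have : ((c:ℝ) - 1) + 1 = c := by ring
      have hcast : ((c-1 : ℕ):ℝ) = (c:ℝ) - 1 := by
        have : (1:ℕ) ≤ c := hc
        push_cast [Nat.cast_sub this]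
        ring
      rw [hcast, this]
      simp [div_eq_mul_inv]
    · intro i hi hne
      have hi' : i < c := Finset.mem_range.mp hi
      have : c - 1 - i ≠ 0 := by omega
      simp [zero_pow this]
  rw [hval] at hlim
  apply Filter.Tendsto.congr' _ hlim
  filter_upwards [eventually_ge_atTop 1] with m hm
  have hm0 : (m:ℝ) ≠ 0 := Nat.cast_ne_zero.mpr (by omega)
  have h2 : ∀ k : ℕ, ((D.eval (k:ℚ) : ℚ):ℝ) = ∑ i ∈ Finset.range c, (D.coeff i : ℝ) * (k:ℝ)^i := by
    intro k
    rw [Polynomial.eval_eq_sum_range' h]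
    push_cast
    rfl
  calc (∑ i ∈ Finset.range c,
        (D.coeff i : ℝ) * ((∑ k ∈ Finset.range (m+1), (k:ℝ)^i)/(m:ℝ)^(i+1)) * (1/(m:ℝ))^(c-1-i))
      = ∑ i ∈ Finset.range c,
        ((D.coeff i : ℝ) * (∑ k ∈ Finset.range (m+1), (k:ℝ)^i))/(m:ℝ)^c := by
        apply Finset.sum_congr rfl
        intro i hi
        have hic : i < c := Finset.mem_range.mp hi
        have hpow : (m:ℝ)^c = (m:ℝ)^(i+1) * (m:ℝ)^(c-1-i) := by
          rw [← pow_add]; congr 1; omega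
        rw [hpow]
        have hne : (m:ℝ)^(i+1) ≠ 0 := pow_ne_zero _ hm0
        have hne2 : (m:ℝ)^(c-1-i) ≠ 0 := pow_ne_zero _ hm0
        rw [one_div, inv_pow]
        field_simp
    _ = (∑ k ∈ Finset.range (m+1), ((D.eval (k:ℚ) : ℚ):ℝ)) / (m:ℝ)^c := by
        rw [← Finset.sum_div]
        congr 1
        rw [show (∑ i ∈ Finset.range c, (D.coeff i:ℝ) * ∑ k ∈ Finset.range (m+1), (k:ℝ)^i)
            = ∑ i ∈ Finset.range c, ∑ k ∈ Finset.range (m+1), (D.coeff i:ℝ) * (k:ℝ)^i by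
          simp [Finset.mul_sum], Finset.sum_comm]
        exact Finset.sum_congr rfl fun k _ => (h2 k).symm

private lemma auxParity {u : ℕ → ℝ} {l : ℝ}
    (h0 : Tendsto (fun m => u (2*m)) atTop (nhds l))
    (h1 : Tendsto (fun m => u (2*m+1)) atTop (nhds l)) :
    Tendsto u atTop (nhds l) := by
  rw [Metric.tendsto_atTop] at h0 h1 ⊢
  intro ε hε
  obtain ⟨N0, hN0⟩ := h0 ε hε
  obtain ⟨N1, hN1⟩ := h1 ε hε
  refine ⟨2*N0 + 2*N1 + 1, fun n hn => ?_⟩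
  rcases Nat.even_or_odd n with ⟨m, hm⟩ | ⟨m, hm⟩
  · have hn2 : n = 2*m := by omega
    rw [hn2]
    exact hN0 m (by omega)
  · rw [hm]
    exact hN1 m (by omega)

/-- Remark 2.3: with `P_ev`, `P_odd` the eventual even/odd Tor-length polynomials
(of degree at most `c-1`), and `β_j` the length of `Tor^R_j(M,N)` when finite and `0`
otherwise, the sequence `(Σ_{j=0}^n (-1)^j β_j)/n^c` converges to
`(a_{c-1} - b_{c-1})/(2^c · c)`, where `a_{c-1}`, `b_{c-1}` are the coefficients of
`j^{c-1}` in `P_ev`, `P_odd`. -/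
theorem statement1 (Q : Type) [CommRing Q] [IsNoetherianRing Q]
    (c : ℕ) (hc : 1 ≤ c) (f : Fin c → Q)
    (hreg : RingTheory.Sequence.IsRegular Q (List.ofFn f))
    (M N : ModuleCat.{0} (Q ⧸ Ideal.span (Set.range f)))
    (hM : Module.Finite (Q ⧸ Ideal.span (Set.range f)) M)
    (hN : Module.Finite (Q ⧸ Ideal.span (Set.range f)) N)
    (htorQ : ∃ J : ℕ, ∀ j ≥ J, Subsingleton
      (modTor Q j
        ((ModuleCat.restrictScalars (Ideal.Quotient.mk (Ideal.span (Set.range f)))).obj M)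
        ((ModuleCat.restrictScalars (Ideal.Quotient.mk (Ideal.span (Set.range f)))).obj N)))
    (htorR : ∃ J : ℕ, ∀ j ≥ J, IsFiniteLength (Q ⧸ Ideal.span (Set.range f))
      (modTor (Q ⧸ Ideal.span (Set.range f)) j M N))
    (Pev Podd : Polynomial ℚ)
    (hPev : Pev.degree ≤ (c - 1 : ℕ)) (hPodd : Podd.degree ≤ (c - 1 : ℕ))
    (J : ℕ)
    (hvals : ∀ j ≥ J,
      ((modLength (Q ⧸ Ideal.span (Set.range f))
          (modTor (Q ⧸ Ideal.span (Set.range f)) (2 * j) M N)).toNat : ℚ)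
        = Pev.eval (j : ℚ) ∧
      ((modLength (Q ⧸ Ideal.span (Set.range f))
          (modTor (Q ⧸ Ideal.span (Set.range f)) (2 * j + 1) M N)).toNat : ℚ)
        = Podd.eval (j : ℚ))
    (β : ℕ → ℚ)
    (hβfin : ∀ j, IsFiniteLength (Q ⧸ Ideal.span (Set.range f))
        (modTor (Q ⧸ Ideal.span (Set.range f)) j M N) →
      β j = ((modLength (Q ⧸ Ideal.span (Set.range f))
        (modTor (Q ⧸ Ideal.span (Set.range f)) j M N)).toNat : ℚ))
    (hβinf : ∀ j, ¬ IsFiniteLength (Q ⧸ Ideal.span (Set.range f))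
        (modTor (Q ⧸ Ideal.span (Set.range f)) j M N) →
      β j = 0) :
    Filter.Tendsto
      (fun n : ℕ => (∑ j ∈ Finset.range (n + 1), (-1 : ℚ) ^ j * β j) / (n : ℚ) ^ c)
      Filter.atTop
      (nhds ((Pev.coeff (c - 1) - Podd.coeff (c - 1)) / (2 ^ c * c))) := by
  obtain ⟨J₁, hJ₁⟩ := htorR
  obtain ⟨S, hS⟩ : ∃ S : ℕ → ℚ,
      S = fun n => ∑ j ∈ Finset.range (n+1), (-1:ℚ)^j * β j := ⟨_, rfl⟩
  obtain ⟨D, hD⟩ : ∃ D : Polynomial ℚ, D = Pev - Podd := ⟨_, rfl⟩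
  obtain ⟨K, hKJ, hKJ₁⟩ : ∃ K : ℕ, J ≤ K ∧ J₁ ≤ K :=
    ⟨max J J₁, le_max_left _ _, le_max_right _ _⟩
  obtain ⟨U, hU⟩ : ∃ U : ℕ → ℚ,
      U = fun m => ∑ k ∈ Finset.range (m+1), D.eval (k:ℚ) := ⟨_, rfl⟩
  obtain ⟨C', hC'⟩ : ∃ C' : ℚ, C' = S (2*K+1) - U K := ⟨_, rfl⟩
  have hβe : ∀ m, K ≤ m → β (2*m) = Pev.eval (m:ℚ) := by
    intro m hm
    rw [hβfin _ (hJ₁ (2*m) (by omega))]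
    exact (hvals m (by omega)).1
  have hβo : ∀ m, K ≤ m → β (2*m+1) = Podd.eval (m:ℚ) := by
    intro m hm
    rw [hβfin _ (hJ₁ (2*m+1) (by omega))]
    exact (hvals m (by omega)).2
  have step1 : ∀ n, S (n+1) = S n + (-1:ℚ)^(n+1) * β (n+1) := by
    intro n
    simp only [hS]
    rw [Finset.sum_range_succ]
  have step2 : ∀ n, S (n+1+1)
      = S n + (-1:ℚ)^(n+1) * β (n+1) + (-1:ℚ)^(n+1+1) * β (n+1+1) := by
    intro n
    simp only [hS]
    rw [Finset.sum_range_succ, Finset.sum_range_succ]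
  have hodd : ∀ m, K ≤ m → S (2*m+1) = C' + U m := by
    have key : ∀ m, K ≤ m →
        S (2*m+1) = S (2*K+1) + ∑ k ∈ Finset.Ico (K+1) (m+1), D.eval (k:ℚ) := by
      intro m hm
      induction m, hm using Nat.le_induction with
      | base => simp
      | succ m hm ih =>
        have harg : 2*(m+1)+1 = (2*m+1)+1+1 := by ring
        rw [harg, step2 (2*m+1)]
        have e1 : β (2*m+1+1) = Pev.eval ((m+1 : ℕ):ℚ) := by
          have h := hβe (m+1) (by omega)
          rwa [show 2*(m+1) = 2*m+1+1 by ring] at h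
        have e2 : β (2*m+1+1+1) = Podd.eval ((m+1 : ℕ):ℚ) := by
          have h := hβo (m+1) (by omega)
          rwa [show 2*(m+1)+1 = 2*m+1+1+1 by ring] at h
        have ev : (-1:ℚ)^(2*m+1+1) = 1 := Even.neg_one_pow ⟨m+1, by ring⟩
        have od : (-1:ℚ)^(2*m+1+1+1) = -1 := Odd.neg_one_pow ⟨m+1, by ring⟩
        rw [e1, e2, ev, od, ih, Finset.sum_Ico_succ_top (show K+1 ≤ m+1 by omega)]
        simp only [hD, Polynomial.eval_sub]
        push_cast
        ring
    intro m hm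
    rw [key m hm, Finset.sum_Ico_eq_sub _ (show K+1 ≤ m+1 by omega), hC']
    have hUm : U m = ∑ k ∈ Finset.range (m+1), D.eval (k:ℚ) := by rw [hU]
    have hUK : U K = ∑ k ∈ Finset.range (K+1), D.eval (k:ℚ) := by rw [hU]
    rw [← hUm, ← hUK]
    ring
  have heven : ∀ m, K ≤ m → S (2*m) = C' + U m + Podd.eval (m:ℚ) := by
    intro m hm
    have h1 := step1 (2*m)
    have od : (-1:ℚ)^(2*m+1) = -1 := Odd.neg_one_pow ⟨m, rfl⟩
    rw [od, hβo m hm, hodd m hm] at h1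
    linarith [h1]
  -- real analysis part
  have hcR : (c:ℝ) ≠ 0 := Nat.cast_ne_zero.mpr (by omega)
  have hDnd : D.natDegree < c := by
    have hdeg : D.degree ≤ ((c-1:ℕ) : WithBot ℕ) := by
      rw [hD]
      exact le_trans (Polynomial.degree_sub_le _ _) (max_le hPev hPodd)
    have h2 := Polynomial.natDegree_le_iff_degree_le.mpr hdeg
    omega
  have hPoddnd : Podd.natDegree < c + 1 := by
    have h2 := Polynomial.natDegree_le_iff_degree_le.mpr hPodd
    omega
  have hPoddc : Podd.coeff c = 0 := by
    apply Polynomial.coeff_eq_zero_of_degree_lt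
    exact lt_of_le_of_lt hPodd (by exact_mod_cast (show c-1 < c by omega))
  have h3 := auxPolySum D c hc hDnd
  have hc0 := auxConst ((C' : ℚ):ℝ) c (by omega)
  have hUc : Filter.Tendsto (fun m : ℕ => (((C' + U m : ℚ)):ℝ)/(m:ℝ)^c) Filter.atTop
      (nhds ((D.coeff (c-1) : ℝ)/(c:ℝ))) := by
    have h4 := hc0.add h3
    rw [zero_add] at h4
    apply h4.congr
    intro m
    rw [hU]
    push_cast
    rw [add_div]
  have hPoddlim : Filter.Tendsto (fun m : ℕ => ((Podd.eval (m:ℚ) : ℚ):ℝ)/(m:ℝ)^c)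
      Filter.atTop (nhds 0) := by
    have h5 := auxPoly Podd c hPoddnd
    rwa [hPoddc, Rat.cast_zero] at h5
  obtain ⟨u, hu⟩ : ∃ u : ℕ → ℝ, u = fun n => ((S n : ℚ):ℝ)/(n:ℝ)^c := ⟨_, rfl⟩
  have Lval : ((D.coeff (c-1):ℝ)/(c:ℝ)) * (1/2)^c = (D.coeff (c-1):ℝ)/(2^c * (c:ℝ)) := by
    rw [div_pow, one_pow, div_mul_div_comm, mul_one, mul_comm ((c:ℝ)) ((2:ℝ)^c)]
  have hodd_lim : Filter.Tendsto (fun m : ℕ => u (2*m+1)) Filter.atTop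
      (nhds ((D.coeff (c-1):ℝ)/(2^c*(c:ℝ)))) := by
    have hp := hUc.mul (auxHalf.pow c)
    rw [Lval] at hp
    apply Filter.Tendsto.congr' _ hp
    filter_upwards [Filter.eventually_ge_atTop (K+1)] with m hm
    have hmK : K ≤ m := by omega
    have hm0 : (m:ℝ) ≠ 0 := Nat.cast_ne_zero.mpr (by omega)
    have h2m : (2*(m:ℝ)+1) ≠ 0 := by positivity
    simp only [hu]
    rw [hodd m hmK]
    push_cast
    field_simp
    rw [mul_assoc, ← mul_pow, div_mul_cancel₀ _ (by positivity)]
  have heven_lim : Filter.Tendsto (fun m : ℕ => u (2*m)) Filter.atTop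
      (nhds ((D.coeff (c-1):ℝ)/(2^c*(c:ℝ)))) := by
    have hsum := hUc.add hPoddlim
    rw [add_zero] at hsum
    have hp := hsum.mul_const ((1/2:ℝ)^c)
    rw [Lval] at hp
    apply Filter.Tendsto.congr' _ hp
    filter_upwards [Filter.eventually_ge_atTop (K+1)] with m hm
    have hmK : K ≤ m := by omega
    have hm0 : (m:ℝ) ≠ 0 := Nat.cast_ne_zero.mpr (by omega)
    simp only [hu]
    rw [heven m hmK]
    push_cast
    rw [mul_pow, div_pow, one_pow]
    field_simp
  have main := auxParity heven_lim hodd_lim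
  rw [Rat.isEmbedding_coe_real.tendsto_nhds_iff]
  have hLcast : ((((Pev.coeff (c-1) - Podd.coeff (c-1)) / (2^c * c) : ℚ)):ℝ)
      = (D.coeff (c-1):ℝ)/(2^c*(c:ℝ)) := by
    rw [hD, Polynomial.coeff_sub]
    push_cast
    ring
  rw [hLcast]
  apply Filter.Tendsto.congr _ main
  intro n
  simp only [hu, hS, Function.comp_apply]
  push_cast
  ring
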